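/- For the triangle solitaire on ℤ², the orbit of the line L_n is contained in the set A_n of n-element subsets P of T_n such that for each 1 ≤ j ≤ n, P has at most j points in the j rightmost columns of T_n. -/

import Mathlib

open scoped symmDiff

/-- The triangle shape `T = {(0,0),(1,0),(0,1)}` in `ℤ²`. -/
def TriShape : Set (ℤ × ℤ) := {(0,0), (1,0), (0,1)}

/-- The translate `v + A` of a set `A ⊆ ℤ²`. -/
def tr (v : ℤ × ℤ) (A : Set (ℤ × ℤ)) : Set (ℤ × ℤ) := (fun p => v + p) '' A

/-- A triangle solitaire move: for some `v`, both `P` and `Q` meet `v + T` in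
exactly 2 elements and `P △ Q` is a 2-element subset of `v + T`. -/
def TriMove (P Q : Set (ℤ × ℤ)) : Prop :=
  ∃ v : ℤ × ℤ, (P ∩ tr v TriShape).ncard = 2 ∧ (Q ∩ tr v TriShape).ncard = 2 ∧
    (P ∆ Q) ⊆ tr v TriShape ∧ (P ∆ Q).ncard = 2

/-- The triangle `T_n = {(a,b) : a,b ≥ 0, a + b ≤ n - 1}`. -/
def TnSet (n : ℕ) : Set (ℤ × ℤ) :=
  {p | 0 ≤ p.1 ∧ 0 ≤ p.2 ∧ p.1 + p.2 < (n : ℤ)}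

/-- The horizontal edge `{0,…,n-1} × {0}` of `T_n`. -/
def horizEdge (n : ℕ) : Set (ℤ × ℤ) := {p | 0 ≤ p.1 ∧ p.1 < (n : ℤ) ∧ p.2 = 0}

/-- The vertical edge `{0} × {0,…,n-1}` of `T_n`. -/
def vertEdge (n : ℕ) : Set (ℤ × ℤ) := {p | p.1 = 0 ∧ 0 ≤ p.2 ∧ p.2 < (n : ℤ)}

/-- The diagonal edge `{(i, n-1-i) : 0 ≤ i ≤ n-1}` of `T_n`. -/
def diagEdge (n : ℕ) : Set (ℤ × ℤ) :=
  {p | 0 ≤ p.1 ∧ 0 ≤ p.2 ∧ p.1 + p.2 = (n : ℤ) - 1}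


/-- The orbit of the line `L_n` is contained in the set `A_n` of `n`-element
subsets of `T_n` having at most `j` points in the `j` rightmost columns. -/
lemma tr_triShape (v : ℤ × ℤ) : tr v TriShape = {v, v + (1,0), v + (0,1)} := by
  simp [tr, TriShape, Set.image_insert_eq, Set.image_singleton, Prod.mk_zero_zero]

lemma tnSet_finite (n : ℕ) : (TnSet n).Finite := by
  apply Set.Finite.subset (Set.finite_Icc ((0:ℤ),(0:ℤ)) ((n:ℤ),(n:ℤ)))
  rintro ⟨x, y⟩ ⟨hx, hy, hxy⟩
  simp only [Set.mem_Icc, Prod.le_def]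
  exact ⟨⟨hx, hy⟩, ⟨by omega, by omega⟩⟩

lemma natIm_inj : Function.Injective (fun i : ℕ => ((i:ℤ), (0:ℤ))) := by
  intro i j hij
  simpa using hij

lemma horizEdge_inter (n j : ℕ) (hjn : j ≤ n) :
    horizEdge n ∩ {p : ℤ × ℤ | (n:ℤ) - (j:ℤ) ≤ p.1}
      = ↑((Finset.Ico (n - j) n).image (fun i : ℕ => ((i:ℤ), (0:ℤ)))) := by
  ext ⟨x, y⟩
  simp only [horizEdge, Set.mem_setOf_eq, Finset.coe_image, Set.mem_image,
    Finset.mem_coe, Finset.mem_Ico, Set.mem_inter_iff, Prod.mk.injEq]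
  constructor
  · rintro ⟨⟨hx, hxn, hy⟩, hge⟩
    exact ⟨x.toNat, ⟨by omega, by omega⟩, by omega, hy.symm⟩
  · rintro ⟨i, ⟨hi1, hi2⟩, rfl, rfl⟩
    refine ⟨⟨by omega, by exact_mod_cast hi2, rfl⟩, by simp; omega⟩

lemma horizEdge_eq (n : ℕ) :
    horizEdge n = ↑((Finset.range n).image (fun i : ℕ => ((i:ℤ), (0:ℤ)))) := by
  ext ⟨x, y⟩
  simp only [horizEdge, Set.mem_setOf_eq, Finset.coe_image, Set.mem_image,
    Finset.mem_coe, Finset.mem_range, Prod.mk.injEq]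
  constructor
  · rintro ⟨hx, hxn, hy⟩
    exact ⟨x.toNat, by omega, by omega, hy.symm⟩
  · rintro ⟨i, hi, rfl, rfl⟩
    exact ⟨by omega, by exact_mod_cast hi, rfl⟩

lemma horizEdge_ncard (n : ℕ) : (horizEdge n).ncard = n := by
  rw [horizEdge_eq, Set.ncard_coe_finset, Finset.card_image_of_injective _ natIm_inj,
    Finset.card_range]

lemma horizEdge_count (n j : ℕ) (hjn : j ≤ n) :
    (horizEdge n ∩ {p : ℤ × ℤ | (n:ℤ) - (j:ℤ) ≤ p.1}).ncard ≤ j := by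
  rw [horizEdge_inter n j hjn, Set.ncard_coe_finset,
    Finset.card_image_of_injective _ natIm_inj, Nat.card_Ico]
  omega

/-- `a b c` are the three vertices of some translated triangle, in some order. -/
def Tri3 (a b c : ℤ × ℤ) : Prop := ∃ v : ℤ × ℤ,
  (a = v ∧ b = v+(1,0) ∧ c = v+(0,1)) ∨ (a = v ∧ b = v+(0,1) ∧ c = v+(1,0)) ∨
  (a = v+(1,0) ∧ b = v ∧ c = v+(0,1)) ∨ (a = v+(1,0) ∧ b = v+(0,1) ∧ c = v) ∨
  (a = v+(0,1) ∧ b = v ∧ c = v+(1,0)) ∨ (a = v+(0,1) ∧ b = v+(1,0) ∧ c = v)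

lemma tri3_tn {a b c : ℤ × ℤ} (h : Tri3 a b c) (n : ℕ)
    (ha : a ∈ TnSet n) (hc : c ∈ TnSet n) : b ∈ TnSet n := by
  obtain ⟨⟨vx, vy⟩, h⟩ := h
  simp only [TnSet, Set.mem_setOf_eq, Prod.mk.injEq, Prod.ext_iff, Prod.fst_add,
    Prod.snd_add] at *
  rcases h with ⟨h1,h2,h3⟩|⟨h1,h2,h3⟩|⟨h1,h2,h3⟩|⟨h1,h2,h3⟩|⟨h1,h2,h3⟩|⟨h1,h2,h3⟩ <;>
    obtain ⟨h1a, h1b⟩ := h1 <;> obtain ⟨h2a, h2b⟩ := h2 <;> obtain ⟨h3a, h3b⟩ := h3 <;>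
    rw [h2a, h2b] <;> rw [h1a, h1b] at ha <;> rw [h3a, h3b] at hc <;>
    simp at * <;> omega

lemma tri3_x {a b c : ℤ × ℤ} (h : Tri3 a b c) :
    b.1 ≤ a.1 + 1 ∧ (a.1 + 1 ≤ b.1 → c.1 = a.1) := by
  obtain ⟨⟨vx, vy⟩, h⟩ := h
  rcases h with ⟨h1,h2,h3⟩|⟨h1,h2,h3⟩|⟨h1,h2,h3⟩|⟨h1,h2,h3⟩|⟨h1,h2,h3⟩|⟨h1,h2,h3⟩ <;>
    rw [h1, h2, h3] <;> simp <;> omega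

set_option maxHeartbeats 2000000 in
lemma move_struct {P Q : Set (ℤ × ℤ)} (h : TriMove P Q) :
    ∃ a b c : ℤ × ℤ, a ∈ P ∧ b ∉ P ∧ c ∈ P ∧ c ∈ Q ∧
      Q = insert b (P \ {a}) ∧ Tri3 a b c := by
  obtain ⟨v, hP2, hQ2, hsub, hcard⟩ := h
  set t := tr v TriShape with ht
  have htfin : t.Finite := by
    rw [ht, tr_triShape]
    exact (Set.finite_singleton _).insert _ |>.insert _
  have hPQ : P ∆ Q = (P \ Q) ∪ (Q \ P) := Set.symmDiff_def P Q
  have hsdfin : (P ∆ Q).Finite := htfin.subset hsub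
  have hfin1 : (P \ Q).Finite := hsdfin.subset (hPQ ▸ Set.subset_union_left)
  have hfin2 : (Q \ P).Finite := hsdfin.subset (hPQ ▸ Set.subset_union_right)
  have hsum : (P \ Q).ncard + (Q \ P).ncard = 2 := by
    rw [← Set.ncard_union_eq disjoint_sdiff_sdiff hfin1 hfin2, ← hPQ, hcard]
  have hPtfin : (P ∩ t).Finite := htfin.subset Set.inter_subset_right
  have hQtfin : (Q ∩ t).Finite := htfin.subset Set.inter_subset_right
  -- Neither difference is empty
  have hne1 : (P \ Q).Nonempty := by
    rw [Set.nonempty_iff_ne_empty]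
    intro he
    have hPsub : P ⊆ Q := Set.diff_eq_empty.mp he
    have heq : P ∩ t = Q ∩ t :=
      Set.eq_of_subset_of_ncard_le (Set.inter_subset_inter_left t hPsub)
        (by rw [hP2, hQ2]) hQtfin
    have hQP : Q \ P = ∅ := by
      rw [Set.diff_eq_empty]
      intro p hpQ
      by_contra hpP
      have hpt : p ∈ t := hsub (hPQ ▸ Or.inr ⟨hpQ, hpP⟩)
      have hpPt : p ∈ P ∩ t := by rw [heq]; exact ⟨hpQ, hpt⟩
      exact hpP hpPt.1
    rw [hPQ, he, hQP] at hcard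
    simp at hcard
  have hne2 : (Q \ P).Nonempty := by
    rw [Set.nonempty_iff_ne_empty]
    intro he
    have hQsub : Q ⊆ P := Set.diff_eq_empty.mp he
    have heq : Q ∩ t = P ∩ t :=
      Set.eq_of_subset_of_ncard_le (Set.inter_subset_inter_left t hQsub)
        (by rw [hP2, hQ2]) hPtfin
    have hPQ' : P \ Q = ∅ := by
      rw [Set.diff_eq_empty]
      intro p hpP
      by_contra hpQ
      have hpt : p ∈ t := hsub (hPQ ▸ Or.inl ⟨hpP, hpQ⟩)
      have hpQt : p ∈ Q ∩ t := by rw [heq]; exact ⟨hpP, hpt⟩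
      exact hpQ hpQt.1
    rw [hPQ, he, hPQ'] at hcard
    simp at hcard
  have h11 : (P \ Q).ncard = 1 ∧ (Q \ P).ncard = 1 := by
    have g1 : 0 < (P \ Q).ncard := (Set.ncard_pos hfin1).mpr hne1
    have g2 : 0 < (Q \ P).ncard := (Set.ncard_pos hfin2).mpr hne2
    omega
  obtain ⟨a, ha⟩ := Set.ncard_eq_one.mp h11.1
  obtain ⟨b, hb⟩ := Set.ncard_eq_one.mp h11.2
  have haPQ : a ∈ P \ Q := by rw [ha]; rfl
  have hbQP : b ∈ Q \ P := by rw [hb]; rfl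
  have hat : a ∈ t := hsub (hPQ ▸ Or.inl haPQ)
  have hbt : b ∈ t := hsub (hPQ ▸ Or.inr hbQP)
  -- the third vertex
  obtain ⟨x, y, hxy, hPt⟩ := Set.ncard_eq_two.mp hP2
  have haxy : a ∈ ({x, y} : Set (ℤ × ℤ)) := hPt ▸ (⟨haPQ.1, hat⟩ : a ∈ P ∩ t)
  obtain ⟨c, hcxy, hca⟩ : ∃ c, c ∈ ({x, y} : Set (ℤ × ℤ)) ∧ c ≠ a := by
    rcases haxy with h | h
    · exact ⟨y, Or.inr rfl, by rw [← h] at hxy; simp at h ⊢; exact fun hc => hxy hc.symm⟩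
    · exact ⟨x, Or.inl rfl, by rw [Set.mem_singleton_iff] at h; rw [← h] at hxy; exact hxy⟩
  have hcPt : c ∈ P ∩ t := hPt ▸ hcxy
  have hcQ : c ∈ Q := by
    by_contra hcQ
    have : c ∈ P \ Q := ⟨hcPt.1, hcQ⟩
    rw [ha] at this
    exact hca this
  have hQeq : Q = insert b (P \ {a}) := by
    ext p
    simp only [Set.mem_insert_iff, Set.mem_diff, Set.mem_singleton_iff]
    constructor
    · intro hpQ
      by_cases hpP : p ∈ P
      · refine Or.inr ⟨hpP, ?_⟩
        rintro rfl
        exact haPQ.2 hpQ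
      · have : p ∈ Q \ P := ⟨hpQ, hpP⟩
        rw [hb] at this
        exact Or.inl this
    · rintro (rfl | ⟨hpP, hpa⟩)
      · exact hbQP.1
      · by_contra hpQ
        have : p ∈ P \ Q := ⟨hpP, hpQ⟩
        rw [ha] at this
        exact hpa this
  have hab : a ≠ b := fun h => hbQP.2 (h ▸ haPQ.1)
  have hcb : c ≠ b := fun h => hbQP.2 (h ▸ hcPt.1)
  refine ⟨a, b, c, haPQ.1, hbQP.2, hcPt.1, hcQ, hQeq, ?_⟩
  have hct : c ∈ t := hcPt.2
  have hv1 : v ≠ v + (1,0) := by intro h; apply_fun Prod.fst at h; simp at h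
  have hv2 : v ≠ v + (0,1) := by intro h; apply_fun Prod.snd at h; simp at h
  have hv3 : v + (1,0) ≠ v + (0,1) := by intro h; apply_fun Prod.fst at h; simp at h
  rw [ht, tr_triShape] at hat hbt hct
  simp only [Set.mem_insert_iff, Set.mem_singleton_iff] at hat hbt hct
  refine ⟨v, ?_⟩
  rcases hat with rfl | rfl | rfl <;> rcases hbt with rfl | rfl | rfl <;>
    rcases hct with rfl | rfl | rfl <;> simp_all

lemma ncard_insert_diff {P : Set (ℤ × ℤ)} (hP : P.Finite) {a b : ℤ × ℤ}
    (ha : a ∈ P) (hb : b ∉ P) : (insert b (P \ {a})).ncard = P.ncard := by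
  rw [Set.ncard_insert_of_notMem (fun h => hb h.1) (hP.diff (t := {a}))]
  have := Set.ncard_diff_singleton_add_one ha hP
  omega

lemma inter_insert_diff {P : Set (ℤ × ℤ)} {a b : ℤ × ℤ} {S : Set (ℤ × ℤ)}
    (hbS : b ∈ S) : insert b (P \ {a}) ∩ S = insert b ((P ∩ S) \ {a}) := by
  ext p
  simp only [Set.mem_inter_iff, Set.mem_insert_iff, Set.mem_diff,
    Set.mem_singleton_iff]
  constructor
  · rintro ⟨rfl | ⟨hp, hpa⟩, hpS⟩
    · exact Or.inl rfl
    · exact Or.inr ⟨⟨hp, hpS⟩, hpa⟩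
  · rintro (rfl | ⟨⟨hp, hpS⟩, hpa⟩)
    · exact ⟨Or.inl rfl, hbS⟩
    · exact ⟨Or.inr ⟨hp, hpa⟩, hpS⟩

lemma inv_step (n : ℕ) {P Q : Set (ℤ × ℤ)}
    (hsub : P ⊆ TnSet n) (hcard : P.ncard = n)
    (hcnt : ∀ j : ℕ, 1 ≤ j → j ≤ n →
      (P ∩ {p : ℤ × ℤ | (n : ℤ) - (j : ℤ) ≤ p.1}).ncard ≤ j)
    (hm : TriMove P Q) :
    Q ⊆ TnSet n ∧ Q.ncard = n ∧
    ∀ j : ℕ, 1 ≤ j → j ≤ n →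
      (Q ∩ {p : ℤ × ℤ | (n : ℤ) - (j : ℤ) ≤ p.1}).ncard ≤ j := by
  have hPfin : P.Finite := (tnSet_finite n).subset hsub
  obtain ⟨a, b, c, haP, hbP, hcP, hcQ, hQeq, htri⟩ := move_struct hm
  have hbT : b ∈ TnSet n := tri3_tn htri n (hsub haP) (hsub hcP)
  have hQsub : Q ⊆ TnSet n := by
    rw [hQeq]
    rintro p (rfl | ⟨hp, -⟩)
    · exact hbT
    · exact hsub hp
  have hQfin : Q.Finite := (tnSet_finite n).subset hQsub
  have hQcard : Q.ncard = n := by rw [hQeq, ncard_insert_diff hPfin haP hbP, hcard]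
  refine ⟨hQsub, hQcard, ?_⟩
  intro j hj1 hjn
  set S : Set (ℤ × ℤ) := {p | (n : ℤ) - (j : ℤ) ≤ p.1} with hS
  by_cases hbS : b ∈ S
  · by_cases haS : a ∈ S
    · rw [hQeq, inter_insert_diff hbS,
        ncard_insert_diff (hPfin.inter_of_left S) ⟨haP, haS⟩ (fun h => hbP h.1)]
      exact hcnt j hj1 hjn
    · -- the move crosses the column boundary
      have hx := tri3_x htri
      have hb1 : (n : ℤ) - j ≤ b.1 := hbS
      have ha1 : ¬ (n : ℤ) - j ≤ a.1 := haS
      have hc1 : c.1 = a.1 := hx.2 (by omega)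
      rcases eq_or_lt_of_le hjn with rfl | hjlt
      · calc (Q ∩ S).ncard ≤ Q.ncard := Set.ncard_le_ncard Set.inter_subset_left hQfin
          _ = j := hQcard
      · set S' : Set (ℤ × ℤ) := {p : ℤ × ℤ | (n : ℤ) - ((j + 1 : ℕ) : ℤ) ≤ p.1} with hS'
        have haS' : a ∈ S' := by simp only [hS', Set.mem_setOf_eq]; push_cast; omega
        have hbS' : b ∈ S' := by simp only [hS', Set.mem_setOf_eq]; push_cast; omega
        have key1 : (Q ∩ S').ncard ≤ j + 1 := by
          rw [hQeq, inter_insert_diff hbS',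
            ncard_insert_diff (hPfin.inter_of_left S') ⟨haP, haS'⟩ (fun h => hbP h.1)]
          exact hcnt (j + 1) (by omega) (by omega)
        have key2 : (Q ∩ S).ncard + 1 ≤ (Q ∩ S').ncard := by
          have hcS : c ∉ S := by simp only [hS, Set.mem_setOf_eq]; omega
          have hins : insert c (Q ∩ S) ⊆ Q ∩ S' := by
            rintro p (rfl | ⟨hpQ, hpS⟩)
            · exact ⟨hcQ, by simp only [hS', Set.mem_setOf_eq]; push_cast; omega⟩
            · refine ⟨hpQ, ?_⟩
              simp only [hS, Set.mem_setOf_eq] at hpS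
              simp only [hS', Set.mem_setOf_eq]
              push_cast
              omega
          have h1 : (insert c (Q ∩ S)).ncard = (Q ∩ S).ncard + 1 :=
            Set.ncard_insert_of_notMem (fun h => hcS h.2) (hQfin.inter_of_left S)
          calc (Q ∩ S).ncard + 1 = (insert c (Q ∩ S)).ncard := h1.symm
            _ ≤ (Q ∩ S').ncard := Set.ncard_le_ncard hins (hQfin.inter_of_left S')
        omega
  · have hQS : Q ∩ S ⊆ P ∩ S := by
      rw [hQeq]
      rintro p ⟨rfl | ⟨hp, -⟩, hpS⟩
      · exact absurd hpS hbS
      · exact ⟨hp, hpS⟩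
    exact le_trans (Set.ncard_le_ncard hQS (hPfin.inter_of_left S)) (hcnt j hj1 hjn)


theorem line_orbit_subset_An (n : ℕ) (Q : Set (ℤ × ℤ))
    (h : Relation.ReflTransGen TriMove (horizEdge n) Q) :
    Q ⊆ TnSet n ∧ Q.ncard = n ∧
    ∀ j : ℕ, 1 ≤ j → j ≤ n →
      (Q ∩ {p : ℤ × ℤ | (n : ℤ) - (j : ℤ) ≤ p.1}).ncard ≤ j := by
  induction h with
  | refl =>
    refine ⟨?_, horizEdge_ncard n, fun j _ h2 => horizEdge_count n j h2⟩
    intro p hp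
    obtain ⟨h1, h2, h3⟩ := hp
    exact ⟨h1, le_of_eq h3.symm, by omega⟩
  | tail _ hmove ih => exact inv_step n ih.1 ih.2.1 ih.2.2 hmove
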